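/- Let λ ∈ ℝ, λ ≠ 0, and define G : ℝ² → ℝ by G(p₀,p₁) = (λ⁻¹sinh(λp₀) + (λ/2)p₁²e^{−λp₀})² + (e^{−λp₀}p₁)² (that is, G = r² in the deformed polar coordinates). Then G is annihilated by the boost vector field: for all (p₀,p₁) ∈ ℝ², p₁·∂G/∂p₀(p₀,p₁) + ((1−e^{2λp₀})/(2λ) + (λ/2)p₁²)·∂G/∂p₁(p₀,p₁) = 0. Hence r² is a central (invariant) quantity for the action of the boost generator of the quantum Euclidean group. -/

import Mathlib

/-- The function `G = r²` in the deformed polar coordinates of the quantum Euclidean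
group: `G(p₀,p₁) = (λ⁻¹sinh(λp₀) + (λ/2)p₁²e^{−λp₀})² + (e^{−λp₀}p₁)²`. -/
noncomputable def Gsym (l : ℝ) (p : ℝ × ℝ) : ℝ :=
  (l⁻¹ * Real.sinh (l * p.1) + l / 2 * p.2 ^ 2 * Real.exp (-(l * p.1))) ^ 2 +
    (Real.exp (-(l * p.1)) * p.2) ^ 2

/-- `G = r²` is annihilated by the boost vector field of the quantum Euclidean group:
`p₁∂₀G + ((1−e^{2λp₀})/(2λ) + (λ/2)p₁²)∂₁G = 0`, so `r²` is a central (invariant)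
quantity for the boost action. -/
theorem boost_invariant_rsq (l : ℝ) (hl : l ≠ 0) (p : ℝ × ℝ) :
    p.2 * fderiv ℝ (Gsym l) p (1, 0) +
      ((1 - Real.exp (2 * l * p.1)) / (2 * l) + l / 2 * p.2 ^ 2) *
        fderiv ℝ (Gsym l) p (0, 1) = 0 := by
  obtain ⟨x, y⟩ := p
  simp only
  have hdiff : DifferentiableAt ℝ (Gsym l) (x, y) := by
    unfold Gsym; fun_prop
  -- x-direction
  have hex : HasDerivAt (fun t : ℝ => Real.exp (-(l * t)))
      (Real.exp (-(l * x)) * (-l)) x := by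
    have h : HasDerivAt (fun t : ℝ => -(l * t)) (-l) x := by
      simpa [Pi.neg_def] using ((hasDerivAt_id x).const_mul l).neg
    simpa using h.exp
  have hax : HasDerivAt (fun t : ℝ => l⁻¹ * Real.sinh (l * t) + l / 2 * y ^ 2 * Real.exp (-(l * t)))
      (l⁻¹ * (Real.cosh (l * x) * l) + l / 2 * y ^ 2 * (Real.exp (-(l * x)) * (-l))) x := by
    have h : HasDerivAt (fun t : ℝ => l * t) l x := by
      simpa using (hasDerivAt_id x).const_mul l
    have hs : HasDerivAt (fun t : ℝ => Real.sinh (l * t)) (Real.cosh (l * x) * l) x := h.sinh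
    exact (hs.const_mul l⁻¹).add (hex.const_mul (l / 2 * y ^ 2))
  have hDx : HasDerivAt (fun t : ℝ => Gsym l (t, y))
      (2 * (l⁻¹ * Real.sinh (l * x) + l / 2 * y ^ 2 * Real.exp (-(l * x))) ^ 1 *
        (l⁻¹ * (Real.cosh (l * x) * l) + l / 2 * y ^ 2 * (Real.exp (-(l * x)) * (-l))) +
       2 * (Real.exp (-(l * x)) * y) ^ 1 * (Real.exp (-(l * x)) * (-l) * y)) x := by
    have := (hax.pow 2).add ((hex.mul_const y).pow 2)
    simpa [Gsym, Pi.add_def, Pi.pow_def] using this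
  have hline1 : HasDerivAt (fun t : ℝ => (t, y)) ((1 : ℝ), (0 : ℝ)) x :=
    (hasDerivAt_id x).prodMk (hasDerivAt_const x y)
  have h1 : HasDerivAt (fun t : ℝ => Gsym l (t, y))
      (fderiv ℝ (Gsym l) (x, y) (1, 0)) x := by
    simpa [Function.comp_def] using hdiff.hasFDerivAt.comp_hasDerivAt x hline1
  have e1 := h1.unique hDx
  -- y-direction
  have hay : HasDerivAt
      (fun s : ℝ => l⁻¹ * Real.sinh (l * x) + l / 2 * s ^ 2 * Real.exp (-(l * x)))
      (l / 2 * (2 * y ^ 1) * Real.exp (-(l * x))) y := by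
    have h : HasDerivAt (fun s : ℝ => l / 2 * s ^ 2 * Real.exp (-(l * x)))
        (l / 2 * (2 * y ^ 1) * Real.exp (-(l * x))) y := by
      have := ((hasDerivAt_pow 2 y).const_mul (l / 2)).mul_const (Real.exp (-(l * x)))
      simpa using this
    simpa using h.const_add (l⁻¹ * Real.sinh (l * x))
  have hby : HasDerivAt (fun s : ℝ => Real.exp (-(l * x)) * s) (Real.exp (-(l * x))) y := by
    simpa using (hasDerivAt_id y).const_mul (Real.exp (-(l * x)))
  have hDy : HasDerivAt (fun s : ℝ => Gsym l (x, s))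
      (2 * (l⁻¹ * Real.sinh (l * x) + l / 2 * y ^ 2 * Real.exp (-(l * x))) ^ 1 *
        (l / 2 * (2 * y ^ 1) * Real.exp (-(l * x))) +
       2 * (Real.exp (-(l * x)) * y) ^ 1 * Real.exp (-(l * x))) y := by
    have := (hay.pow 2).add (hby.pow 2)
    simpa [Gsym, Pi.add_def, Pi.pow_def] using this
  have hline2 : HasDerivAt (fun s : ℝ => (x, s)) ((0 : ℝ), (1 : ℝ)) y :=
    (hasDerivAt_const y x).prodMk (hasDerivAt_id y)
  have h2 : HasDerivAt (fun s : ℝ => Gsym l (x, s))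
      (fderiv ℝ (Gsym l) (x, y) (0, 1)) y := by
    simpa [Function.comp_def] using hdiff.hasFDerivAt.comp_hasDerivAt y hline2
  have e2 := h2.unique hDy
  rw [e1, e2]
  have h2e : Real.exp (2 * l * x) = Real.exp (l * x) * Real.exp (l * x) := by
    rw [← Real.exp_add]; ring_nf
  rw [Real.sinh_eq, Real.cosh_eq, h2e, Real.exp_neg]
  have hE : Real.exp (l * x) ≠ 0 := Real.exp_ne_zero _
  field_simp
  ring
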